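/- Let (R, m) be a commutative noetherian local ring, I an ideal of R, M an R-module and p a prime ideal of R. Then: (a) if M is I-excellent, then the localized module M_p over R_p is IR_p-excellent, where IR_p is the extension of I to R_p; (b) if M_p is IR_p-excellent over R_p and every element s ∈ R \ p acts injectively on M/IM (i.e. s•x̄ = 0 implies x̄ = 0 in M/IM), then M is I-excellent. -/

import Mathlib

/-- `IM` is always contained in the trace `γ_I(M)`. -/
lemma aux_smul_le_trace {R M : Type*} [CommRing R] [AddCommGroup M] [Module R M]
    (I : Ideal R) :
    I • (⊤ : Submodule R M) ≤ ⨆ f : I →ₗ[R] M, LinearMap.range f := by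
  rw [Submodule.smul_le]
  intro r hr m _
  exact le_iSup (fun f : I →ₗ[R] M => LinearMap.range f)
    ((LinearMap.toSpanSingleton R M m).comp (Submodule.subtype I)) ⟨⟨r, hr⟩, rfl⟩

/-- The localization of `I • ⊤` is `IR_p • ⊤`. -/
lemma aux_localized_smul_top {R S M N : Type*} [CommRing R] [CommRing S] [AddCommGroup M]
    [AddCommGroup N] [Module R M] [Module R N] [Algebra R S] [Module S N] [IsScalarTower R S N]
    (p : Submonoid R) [IsLocalization p S] (f : M →ₗ[R] N) [IsLocalizedModule p f] (I : Ideal R) :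
    Submodule.localized' S p f (I • ⊤) = I.map (algebraMap R S) • ⊤ := by
  apply le_antisymm
  · rintro _ ⟨m, hm, s, rfl⟩
    refine Submodule.smul_induction_on
      (p := fun m => IsLocalizedModule.mk' f m s ∈ I.map (algebraMap R S) • ⊤) hm ?_ ?_
    · intro r hr n _
      rw [IsLocalizedModule.mk'_smul, ← algebraMap_smul S r]
      exact Submodule.smul_mem_smul (Ideal.mem_map_of_mem _ hr) trivial
    · intro x y hx hy
      rw [IsLocalizedModule.mk'_add]
      exact add_mem hx hy
  · rw [Submodule.smul_le]
    intro a ha y _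
    refine Submodule.span_induction
      (p := fun a _ => ∀ y : N, a • y ∈ Submodule.localized' S p f (I • ⊤)) ?_ ?_ ?_ ?_ ha y
    · rintro _ ⟨i, hi, rfl⟩ y
      obtain ⟨⟨m, t⟩, rfl⟩ := IsLocalizedModule.mk'_surjective p f y
      simp only [Function.uncurry_apply_pair]
      rw [algebraMap_smul, ← IsLocalizedModule.mk'_smul]
      exact ⟨i • m, Submodule.smul_mem_smul hi trivial, t, rfl⟩
    · intro y; simp
    · intro a b _ _ hpa hpb y
      rw [add_smul]; exact add_mem (hpa y) (hpb y)
    · intro c a _ hpa y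
      rw [smul_assoc]; exact Submodule.smul_mem _ c (hpa y)

/-- Lemma 2.3: (a) if `M` is `I`-excellent, then `M_p` is `IR_p`-excellent over `R_p`;
(b) if `M_p` is `IR_p`-excellent and every `s ∈ R \ p` acts injectively on `M/IM`,
then `M` is `I`-excellent. -/
theorem iExcellent_localization
    {R : Type u} [CommRing R] [IsNoetherianRing R] [IsLocalRing R]
    (I : Ideal R) (M : Type u) [AddCommGroup M] [Module R M]
    (p : Ideal R) [p.IsPrime] :
    ((I • (⊤ : Submodule R M) = ⨆ f : I →ₗ[R] M, LinearMap.range f) →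
      I.map (algebraMap R (Localization.AtPrime p)) •
          (⊤ : Submodule (Localization.AtPrime p) (LocalizedModule p.primeCompl M)) =
        ⨆ f : ↥(I.map (algebraMap R (Localization.AtPrime p)))
            →ₗ[Localization.AtPrime p] LocalizedModule p.primeCompl M,
          LinearMap.range f) ∧
    ((I.map (algebraMap R (Localization.AtPrime p)) •
          (⊤ : Submodule (Localization.AtPrime p) (LocalizedModule p.primeCompl M)) =
        ⨆ f : ↥(I.map (algebraMap R (Localization.AtPrime p)))
            →ₗ[Localization.AtPrime p] LocalizedModule p.primeCompl M,
          LinearMap.range f) →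
      (∀ s ∈ p.primeCompl, ∀ x : M ⧸ (I • (⊤ : Submodule R M)), s • x = 0 → x = 0) →
      I • (⊤ : Submodule R M) = ⨆ f : I →ₗ[R] M, LinearMap.range f) := by
  classical
  set Rp := Localization.AtPrime p with hRp
  set Mp := LocalizedModule p.primeCompl M with hMp'
  set S := p.primeCompl with hS
  set J : Ideal Rp := I.map (algebraMap R Rp) with hJ
  let fM : M →ₗ[R] Mp := LocalizedModule.mkLinearMap S M
  let fR : R →ₗ[R] Rp := Algebra.linearMap R Rp
  haveI : Module.Finite R ↥I := Module.Finite.iff_fg.mpr (IsNoetherian.noetherian I)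
  haveI : Module.FinitePresentation R ↥I := Module.finitePresentation_of_finite R ↥I
  let L : Submodule Rp Rp := Submodule.localized' Rp S fR I
  let toL : ↥I →ₗ[R] ↥L := Submodule.toLocalized' Rp S fR I
  let e' : ↥L ≃ₗ[R] ↥J :=
    (LinearEquiv.ofEq L J (Ideal.localized'_eq_map Rp S I)).restrictScalars R
  let toJ : ↥I →ₗ[R] ↥J := e'.toLinearMap ∘ₗ toL
  haveI hLM : IsLocalizedModule S toJ := IsLocalizedModule.of_linearEquiv S toL e'
  have htoJ : ∀ z : ↥I, ((toJ z : Rp)) = algebraMap R Rp (z : R) := fun z => rfl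
  constructor
  · -- part (a)
    intro hM
    refine le_antisymm (aux_smul_le_trace _) (iSup_le fun g => ?_)
    rintro _ ⟨y, rfl⟩
    let g' : ↥I →ₗ[R] Mp := (g.restrictScalars R).comp toJ
    obtain ⟨h', s, hc⟩ :=
      Module.FinitePresentation.exists_lift_of_isLocalizedModule S fM g'
    have key : ∀ z : ↥I, g (toJ z) ∈ J • (⊤ : Submodule Rp Mp) := by
      intro z
      have hr : h' z ∈ I • (⊤ : Submodule R M) := by
        rw [hM]
        exact le_iSup (fun f : I →ₗ[R] M => LinearMap.range f) h' ⟨z, rfl⟩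
      have h1 : fM (h' z) ∈ Submodule.localized' Rp S fM (I • ⊤) :=
        ⟨h' z, hr, 1, IsLocalizedModule.mk'_one S fM _⟩
      rw [aux_localized_smul_top S fM I] at h1
      have h2 : fM (h' z) = (s : R) • g (toJ z) := by
        have := LinearMap.congr_fun hc z
        simpa [g', Submonoid.smul_def] using this
      have h3 : (algebraMap R Rp (s : R)) • g (toJ z) ∈ J • (⊤ : Submodule Rp Mp) := by
        rw [algebraMap_smul, ← h2]; exact h1
      have h4 : IsUnit (algebraMap R Rp (s : R)) := IsLocalization.map_units Rp s
      have h5 := Submodule.smul_mem (J • (⊤ : Submodule Rp Mp)) (↑h4.unit⁻¹) h3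
      rwa [smul_smul, IsUnit.val_inv_mul, one_smul] at h5
    set K : Submodule Rp ↥J := Submodule.comap g (J • ⊤) with hK
    have hJK : J ≤ Submodule.map J.subtype K := by
      refine Ideal.map_le_iff_le_comap.mpr fun i hi => ?_
      exact ⟨toJ ⟨i, hi⟩, key ⟨i, hi⟩, htoJ ⟨i, hi⟩⟩
    obtain ⟨z, hz, hzy⟩ := hJK y.2
    exact (Subtype.ext hzy : z = y) ▸ hz
  · -- part (b)
    intro hMp hinj
    refine le_antisymm (aux_smul_le_trace _) (iSup_le fun f0 => ?_)
    rintro _ ⟨x, rfl⟩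
    let g0 : ↥J →ₗ[R] Mp := IsLocalizedModule.map S toJ fM f0
    let g : ↥J →ₗ[Rp] Mp := LinearMap.extendScalarsOfIsLocalization S Rp g0
    have hrange : LinearMap.range g ≤ J • (⊤ : Submodule Rp Mp) := by
      rw [hMp]
      exact le_iSup (fun f : ↥J →ₗ[Rp] Mp => LinearMap.range f) g
    have h1 : fM (f0 x) ∈ J • (⊤ : Submodule Rp Mp) := by
      refine hrange ⟨toJ x, ?_⟩
      show g0 (toJ x) = fM (f0 x)
      exact IsLocalizedModule.map_apply S toJ fM f0 x
    rw [← aux_localized_smul_top S fM I] at h1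
    obtain ⟨m, hm, s, hs⟩ := h1
    have h2 : fM ((s : R) • f0 x) = fM m := by
      rw [map_smul, ← hs, ← Submonoid.smul_def, IsLocalizedModule.mk'_cancel']
    obtain ⟨t, ht⟩ := IsLocalizedModule.exists_of_eq (S := S) (f := fM) h2
    have hmem : ((t : R) * (s : R)) • f0 x ∈ I • (⊤ : Submodule R M) := by
      have ht' : (t : R) • (s : R) • f0 x = (t : R) • m := by
        simpa [Submonoid.smul_def] using ht
      rw [mul_smul, ht']
      exact Submodule.smul_mem _ _ hm
    have hq := hinj ((t : R) * (s : R)) (mul_mem t.2 s.2)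
      (Submodule.Quotient.mk (f0 x)) ?_
    · exact (Submodule.Quotient.mk_eq_zero _).mp hq
    · rw [← Submodule.Quotient.mk_smul, Submodule.Quotient.mk_eq_zero]
      exact hmem
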